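/- Let 0 < δ < 1. Suppose that for each j ∈ ℤ we are given a countable family (θ_{j,k})_{k∈K_j} of vectors of H such that (1−δ)‖g‖² ≤ ∑_{k∈K_j} |⟨g, θ_{j,k}⟩|² ≤ ‖g‖² for every g ∈ E_{2^{2j+4}}(L). Define Θ_{j,k} := Φ(2^{-2j}L)θ_{j,k}. Then each Θ_{j,k} belongs to the closed span of {u_m : 2^{2j-2} ≤ λ_m ≤ 2^{2j+4}} (hence to E_{2^{2j+4}}(L)), and for every f ∈ H one has the frame inequalities (1−δ)‖f − Pf‖² ≤ ∑_{j∈ℤ} ∑_{k∈K_j} |⟨f, Θ_{j,k}⟩|² ≤ ‖f − Pf‖². -/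

import Mathlib

open scoped InnerProductSpace

lemma aux_hasSum_mem_closure {H : Type*} [NormedAddCommGroup H] [InnerProductSpace ℂ H]
    {ι : Type*} {c : ι → H} {x : H} {p : Submodule ℂ H} (h : HasSum c x)
    (hc : ∀ i, c i ∈ p) : x ∈ p.topologicalClosure :=
  p.isClosed_topologicalClosure.mem_of_tendsto h (Filter.Eventually.of_forall fun s =>
    p.le_topologicalClosure (Submodule.sum_mem _ fun i _ => hc i))

lemma aux_parseval {H : Type*} [NormedAddCommGroup H] [InnerProductSpace ℂ H] [CompleteSpace H]
    (u : HilbertBasis ℕ ℂ H) (g : H) :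
    HasSum (fun m : ℕ => ‖⟪u m, g⟫_ℂ‖ ^ 2) (‖g‖ ^ 2) := by
  have h := (u.hasSum_inner_mul_inner g g).mapL Complex.reCLM
  simp only [Complex.reCLM_apply] at h
  rw [show Complex.re ⟪g, g⟫_ℂ = ‖g‖ ^ 2 by
    rw [← RCLike.re_to_complex]; exact inner_self_eq_norm_sq g] at h
  convert h using 2 with m
  have e : ⟪g, u m⟫_ℂ = (starRingEnd ℂ) ⟪u m, g⟫_ℂ := (inner_conj_symm _ _).symm
  rw [e, mul_comm, Complex.mul_conj]
  simp [Complex.normSq_eq_norm_sq, ← Complex.ofReal_pow, Complex.ofReal_re]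

lemma aux_orthog {H : Type*} [NormedAddCommGroup H] [InnerProductSpace ℂ H]
    (x : H) (S : Set H) (hS : ∀ y ∈ S, ⟪x, y⟫_ℂ = 0) :
    ∀ z ∈ (Submodule.span ℂ S).topologicalClosure, ⟪x, z⟫_ℂ = 0 := by
  intro z hz
  have hker : (Submodule.span ℂ S).topologicalClosure ≤ LinearMap.ker ((innerSL ℂ x : H →L[ℂ] ℂ) : H →ₗ[ℂ] ℂ) := by
    apply Submodule.topologicalClosure_minimal
    · rw [Submodule.span_le]; intro y hy
      simpa using hS y hy
    · exact ContinuousLinearMap.isClosed_ker (innerSL ℂ x)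
  simpa using hker hz

/-- Hilbert-space core of the Frame Theorem: if for each `j ∈ ℤ` the family `(θ j k)` is a
frame with bounds `1−δ, 1` for the bandlimited space `E_{2^{2j+4}}(L)`, then the functions
`Θ j k := Φ(2^{-2j}L) θ j k` are bandlimited to `[2^{2j-2}, 2^{2j+4}]` and satisfy the frame
inequalities `(1−δ)‖f−Pf‖² ≤ ∑_{j,k} |⟨f, Θ_{j,k}⟩|² ≤ ‖f−Pf‖²` for all `f ∈ H`. -/
theorem frame_theorem_hilbert_core
    {H : Type*} [NormedAddCommGroup H] [InnerProductSpace ℂ H] [CompleteSpace H]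
    (u : HilbertBasis ℕ ℂ H) (lam : ℕ → ℝ) (hlam : ∀ m, 0 ≤ lam m)
    (Φ : ℝ → ℝ) (hΦbd : ∃ C : ℝ, ∀ s, |Φ s| ≤ C)
    (hΦsupp : ∀ s : ℝ, s ∉ Set.Icc ((2 : ℝ) ^ (-2 : ℤ)) ((2 : ℝ) ^ (4 : ℤ)) → Φ s = 0)
    (hΦsum : ∀ s : ℝ, 0 < s → ∑' j : ℤ, |Φ ((2 : ℝ) ^ (-(2 * j)) * s)| ^ 2 = 1)
    (ΦL : ℝ → H → H)
    (hΦL : ∀ t : ℝ, ∀ f : H,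
      HasSum (fun m : ℕ => ((Φ (t * lam m) : ℂ) * ⟪u m, f⟫_ℂ) • u m) (ΦL t f))
    -- `E ω` is the space of `ω`-bandlimited vectors: the closed span of `{u m : λ_m ≤ ω}`
    (E : ℝ → Submodule ℂ H)
    (hE : ∀ ω : ℝ, E ω =
      (Submodule.span ℂ {x : H | ∃ m : ℕ, lam m ≤ ω ∧ x = u m}).topologicalClosure)
    -- `P` is the orthogonal projection onto the closed span of the kernel eigenvectors
    (P : H → H)
    (hPmem : ∀ f : H, P f ∈
      (Submodule.span ℂ {x : H | ∃ m : ℕ, lam m = 0 ∧ x = u m}).topologicalClosure)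
    (hPorth : ∀ f : H, f - P f ∈
      (Submodule.span ℂ {x : H | ∃ m : ℕ, lam m = 0 ∧ x = u m}).topologicalClosureᗮ)
    (δ : ℝ) (hδ0 : 0 < δ) (hδ1 : δ < 1)
    (K : ℤ → Type*) [∀ j, Countable (K j)]
    (θ : (j : ℤ) → K j → H)
    (hframe : ∀ j : ℤ, ∀ g ∈ E ((2 : ℝ) ^ (2 * j + 4)),
      (1 - δ) * ‖g‖ ^ 2 ≤ ∑' k : K j, ‖⟪g, θ j k⟫_ℂ‖ ^ 2 ∧
      ∑' k : K j, ‖⟪g, θ j k⟫_ℂ‖ ^ 2 ≤ ‖g‖ ^ 2)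
    (Θ : (j : ℤ) → K j → H)
    (hΘ : ∀ (j : ℤ) (k : K j), Θ j k = ΦL ((2 : ℝ) ^ (-(2 * j))) (θ j k)) :
    (∀ (j : ℤ) (k : K j),
      Θ j k ∈ (Submodule.span ℂ {x : H | ∃ m : ℕ,
        (2 : ℝ) ^ (2 * j - 2) ≤ lam m ∧ lam m ≤ (2 : ℝ) ^ (2 * j + 4) ∧
          x = u m}).topologicalClosure ∧
      Θ j k ∈ E ((2 : ℝ) ^ (2 * j + 4))) ∧
    (∀ f : H,
      (1 - δ) * ‖f - P f‖ ^ 2 ≤ ∑' p : Σ j : ℤ, K j, ‖⟪f, Θ p.1 p.2⟫_ℂ‖ ^ 2 ∧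
      ∑' p : Σ j : ℤ, K j, ‖⟪f, Θ p.1 p.2⟫_ℂ‖ ^ 2 ≤ ‖f - P f‖ ^ 2) := by
  have two_ne : (2 : ℝ) ≠ 0 := by norm_num
  -- coefficient formula
  have coeff : ∀ (t : ℝ) (f : H) (m : ℕ),
      ⟪u m, ΦL t f⟫_ℂ = (Φ (t * lam m) : ℂ) * ⟪u m, f⟫_ℂ := by
    intro t f m
    have h1 := (hΦL t f).mapL (innerSL ℂ (u m))
    have h2 : HasSum (fun m' : ℕ => if m' = m then (Φ (t * lam m) : ℂ) * ⟪u m, f⟫_ℂ else 0)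
        (⟪u m, ΦL t f⟫_ℂ) := by
      convert h1 using 2 with m'
      case e'_3 => rfl
      case e'_6 => rfl
      rw [innerSL_apply_apply, inner_smul_right, orthonormal_iff_ite.mp u.orthonormal]
      by_cases hm : m' = m
      · simp [hm]
      · simp [hm, Ne.symm hm]
    exact h2.unique (hasSum_ite_eq m _)
  -- self-adjointness
  have adj : ∀ (t : ℝ) (f g : H), ⟪f, ΦL t g⟫_ℂ = ⟪ΦL t f, g⟫_ℂ := by
    intro t f g
    have h1 := (hΦL t g).mapL (innerSL ℂ f)
    have h2 := ((hΦL t f).mapL (innerSL ℂ g)).star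
    simp only [innerSL_apply_apply] at h1 h2
    rw [show (star ⟪g, ΦL t f⟫_ℂ : ℂ) = ⟪ΦL t f, g⟫_ℂ by
      rw [← inner_conj_symm]; simp] at h2
    refine HasSum.unique h1 ?_
    convert h2 using 2 with m
    simp only [inner_smul_right, star_mul', RCLike.star_def, inner_conj_symm, Complex.conj_ofReal]
    ring
  -- band restriction
  have band : ∀ (j : ℤ) (m : ℕ), Φ ((2 : ℝ) ^ (-(2 * j)) * lam m) ≠ 0 →
      (2 : ℝ) ^ (2 * j - 2) ≤ lam m ∧ lam m ≤ (2 : ℝ) ^ (2 * j + 4) := by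
    intro j m hne
    have hmem : (2 : ℝ) ^ (-(2 * j)) * lam m ∈
        Set.Icc ((2 : ℝ) ^ (-2 : ℤ)) ((2 : ℝ) ^ (4 : ℤ)) := by
      by_contra hc; exact hne (hΦsupp _ hc)
    have hp : (0 : ℝ) < (2 : ℝ) ^ (2 * j) := by positivity
    have e1 : (2 : ℝ) ^ (2 * j) * (2 : ℝ) ^ (-(2 * j)) = 1 := by
      rw [← zpow_add₀ two_ne]; simp
    constructor
    · have h := mul_le_mul_of_nonneg_left hmem.1 hp.le
      calc (2 : ℝ) ^ (2 * j - 2) = (2 : ℝ) ^ (2 * j) * (2 : ℝ) ^ (-2 : ℤ) := by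
            rw [sub_eq_add_neg, zpow_add₀ two_ne]
        _ ≤ (2 : ℝ) ^ (2 * j) * ((2 : ℝ) ^ (-(2 * j)) * lam m) := h
        _ = lam m := by rw [← mul_assoc, e1, one_mul]
    · have h := mul_le_mul_of_nonneg_left hmem.2 hp.le
      calc lam m = (2 : ℝ) ^ (2 * j) * ((2 : ℝ) ^ (-(2 * j)) * lam m) := by
            rw [← mul_assoc, e1, one_mul]
        _ ≤ (2 : ℝ) ^ (2 * j) * (2 : ℝ) ^ (4 : ℤ) := h
        _ = (2 : ℝ) ^ (2 * j + 4) := by rw [← zpow_add₀ two_ne]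
  -- membership in closed spans
  have memSpan : ∀ (t : ℝ) (f : H) (S : Set H), (∀ m, Φ (t * lam m) ≠ 0 → u m ∈ S) →
      ΦL t f ∈ (Submodule.span ℂ S).topologicalClosure := by
    intro t f S hS
    refine aux_hasSum_mem_closure (hΦL t f) ?_
    intro m
    by_cases hz : Φ (t * lam m) = 0
    · simp [hz]
    · exact Submodule.smul_mem _ _ (Submodule.subset_span (hS m hz))
  have gmem : ∀ (j : ℤ) (f : H),
      ΦL ((2 : ℝ) ^ (-(2 * j))) f ∈ E ((2 : ℝ) ^ (2 * j + 4)) := by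
    intro j f
    rw [hE]
    exact memSpan _ _ _ (fun m hz => ⟨m, (band j m hz).2, rfl⟩)
  have Φ0 : Φ 0 = 0 := hΦsupp 0 (fun h => absurd h.1 (not_le.mpr (by positivity)))
  refine ⟨?_, ?_⟩
  · intro j k
    rw [hΘ]
    exact ⟨memSpan _ _ _ (fun m hz => ⟨m, (band j m hz).1, (band j m hz).2, rfl⟩), gmem j _⟩
  intro f
  set g : ℤ → H := fun j => ΦL ((2 : ℝ) ^ (-(2 * j))) f with hgdef
  set F : ℕ × ℤ → ℝ :=
    fun p => Φ ((2 : ℝ) ^ (-(2 * p.2)) * lam p.1) ^ 2 * ‖⟪u p.1, f⟫_ℂ‖ ^ 2 with hFdef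
  have hF0 : ∀ p, 0 ≤ F p := fun p => mul_nonneg (sq_nonneg _) (sq_nonneg _)
  -- fiberwise sum over j
  have hFfiber : ∀ m : ℕ, HasSum (fun j : ℤ => F (m, j))
      ((if lam m = 0 then 0 else 1) * ‖⟪u m, f⟫_ℂ‖ ^ 2) := by
    intro m
    by_cases h0 : lam m = 0
    · rw [if_pos h0, zero_mul]
      have hz : ∀ j : ℤ, F (m, j) = 0 := fun j => by simp [hFdef, h0, Φ0]
      simp only [hz]
      exact hasSum_zero
    · have hlt : 0 < lam m := lt_of_le_of_ne (hlam m) (Ne.symm h0)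
      have hsum := hΦsum (lam m) hlt
      have hsummable : Summable (fun j : ℤ => |Φ ((2 : ℝ) ^ (-(2 * j)) * lam m)| ^ 2) := by
        by_contra hns
        rw [tsum_eq_zero_of_not_summable hns] at hsum
        norm_num at hsum
      have h1 : HasSum (fun j : ℤ => |Φ ((2 : ℝ) ^ (-(2 * j)) * lam m)| ^ 2) 1 :=
        hsum ▸ hsummable.hasSum
      simpa [hFdef, sq_abs, if_neg h0] using h1.mul_right (‖⟪u m, f⟫_ℂ‖ ^ 2)
  have hFsummable : Summable F := by
    refine (summable_prod_of_nonneg hF0).mpr ⟨fun m => (hFfiber m).summable, ?_⟩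
    refine Summable.of_nonneg_of_le (fun m => tsum_nonneg fun j => hF0 _)
      (fun m => ?_) (aux_parseval u f).summable
    rw [(hFfiber m).tsum_eq]
    by_cases h0 : lam m = 0 <;> simp [h0, sq_nonneg]
  -- sum over m for fixed j
  have hgsum : ∀ j : ℤ, HasSum (fun m : ℕ => F (m, j)) (‖g j‖ ^ 2) := by
    intro j
    have hp := aux_parseval u (g j)
    convert hp using 2 with m
    rw [hFdef, hgdef]
    simp only [coeff, norm_mul, Complex.norm_real, Real.norm_eq_abs, mul_pow, sq_abs]
  -- marginal over m
  have hmarg : HasSum (fun m : ℕ => (if lam m = 0 then 0 else 1) * ‖⟪u m, f⟫_ℂ‖ ^ 2)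
      (∑' p, F p) := hFsummable.hasSum.prod_fiberwise hFfiber
  have hPf := aux_parseval u (f - P f)
  have coeffP : ∀ m : ℕ, ‖⟪u m, f - P f⟫_ℂ‖ ^ 2 =
      (if lam m = 0 then 0 else 1) * ‖⟪u m, f⟫_ℂ‖ ^ 2 := by
    intro m
    by_cases h0 : lam m = 0
    · rw [if_pos h0, zero_mul]
      have hm : u m ∈ (Submodule.span ℂ
          {x : H | ∃ m : ℕ, lam m = 0 ∧ x = u m}).topologicalClosure :=
        Submodule.le_topologicalClosure _ (Submodule.subset_span ⟨m, h0, rfl⟩)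
      have hz : ⟪u m, f - P f⟫_ℂ = 0 :=
        (Submodule.mem_orthogonal _ _).1 (hPorth f) _ hm
      simp [hz]
    · rw [if_neg h0, one_mul]
      have horth : ⟪u m, P f⟫_ℂ = 0 := by
        refine aux_orthog (u m) _ ?_ (P f) (hPmem f)
        rintro y ⟨m', h0', rfl⟩
        have hne : m ≠ m' := fun h => h0 (by rw [h]; exact h0')
        rw [orthonormal_iff_ite.mp u.orthonormal]
        simp [hne]
      rw [inner_sub_right, horth, sub_zero]
  have htotval : ∑' p, F p = ‖f - P f‖ ^ 2 := by
    simp only [coeffP] at hPf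
    exact hmarg.unique hPf
  -- sum over j of the norms
  have hGj : HasSum (fun j : ℤ => ‖g j‖ ^ 2) (‖f - P f‖ ^ 2) := by
    have hFsw := hFsummable.prod_symm
    have htot : HasSum (fun j : ℤ => ‖g j‖ ^ 2) (∑' p : ℤ × ℕ, F p.swap) :=
      hFsw.hasSum.prod_fiberwise fun j => hgsum j
    have eqtot : ∑' p : ℤ × ℕ, F p.swap = ∑' p, F p := (Equiv.prodComm ℤ ℕ).tsum_eq F
    rwa [eqtot, htotval] at htot
  -- frame bounds fiberwise
  have hbterm : ∀ (j : ℤ) (k : K j), ⟪f, Θ j k⟫_ℂ = ⟪g j, θ j k⟫_ℂ := by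
    intro j k
    rw [hΘ, hgdef]
    exact adj _ _ _
  have hfb : ∀ j : ℤ, (1 - δ) * ‖g j‖ ^ 2 ≤ ∑' k : K j, ‖⟪g j, θ j k⟫_ℂ‖ ^ 2 ∧
      ∑' k : K j, ‖⟪g j, θ j k⟫_ℂ‖ ^ 2 ≤ ‖g j‖ ^ 2 := fun j =>
    hframe j (g j) (by rw [hgdef]; exact gmem j f)
  have Sk : ∀ j : ℤ, Summable (fun k : K j => ‖⟪g j, θ j k⟫_ℂ‖ ^ 2) := by
    intro j
    by_contra hns
    have h0 : ∑' k : K j, ‖⟪g j, θ j k⟫_ℂ‖ ^ 2 = 0 := tsum_eq_zero_of_not_summable hns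
    have hle := (hfb j).1
    rw [h0] at hle
    have hgz : g j = 0 := by
      have h1 : ‖g j‖ ^ 2 ≤ 0 := by nlinarith [sq_nonneg ‖g j‖]
      have h2 : ‖g j‖ = 0 := by nlinarith [norm_nonneg (g j)]
      exact norm_eq_zero.mp h2
    exact hns (by simpa [hgz] using summable_zero)
  have hb0 : ∀ p : Σ j : ℤ, K j, (0 : ℝ) ≤ ‖⟪f, Θ p.1 p.2⟫_ℂ‖ ^ 2 := fun p => sq_nonneg _
  have hfib : ∀ j : ℤ, Summable (fun k : K j => ‖⟪f, Θ j k⟫_ℂ‖ ^ 2) := by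
    intro j
    have := Sk j
    simpa [hbterm] using this
  have hfibeq : ∀ j : ℤ, ∑' k : K j, ‖⟪f, Θ j k⟫_ℂ‖ ^ 2
      = ∑' k : K j, ‖⟪g j, θ j k⟫_ℂ‖ ^ 2 := fun j =>
    tsum_congr fun k => by rw [hbterm]
  have hmargS : Summable (fun j : ℤ => ∑' k : K j, ‖⟪f, Θ j k⟫_ℂ‖ ^ 2) := by
    refine Summable.of_nonneg_of_le (fun j => tsum_nonneg fun k => sq_nonneg _)
      (fun j => ?_) hGj.summable
    rw [hfibeq j]
    exact (hfb j).2
  have hbS : Summable (fun p : Σ j : ℤ, K j => ‖⟪f, Θ p.1 p.2⟫_ℂ‖ ^ 2) :=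
    (summable_sigma_of_nonneg hb0).mpr ⟨hfib, hmargS⟩
  have hsig : ∑' p : Σ j : ℤ, K j, ‖⟪f, Θ p.1 p.2⟫_ℂ‖ ^ 2
      = ∑' j : ℤ, ∑' k : K j, ‖⟪f, Θ j k⟫_ℂ‖ ^ 2 := Summable.tsum_sigma hbS
  constructor
  · calc (1 - δ) * ‖f - P f‖ ^ 2 = (∑' j : ℤ, (1 - δ) * ‖g j‖ ^ 2) := by
          rw [← hGj.tsum_eq]; exact tsum_mul_left.symm
      _ ≤ (∑' j : ℤ, ∑' k : K j, ‖⟪f, Θ j k⟫_ℂ‖ ^ 2) := by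
          refine Summable.tsum_le_tsum (fun j => ?_) (hGj.summable.mul_left (1 - δ)) hmargS
          rw [hfibeq j]
          exact (hfb j).1
      _ = ∑' p : Σ j : ℤ, K j, ‖⟪f, Θ p.1 p.2⟫_ℂ‖ ^ 2 := hsig.symm
  · calc ∑' p : Σ j : ℤ, K j, ‖⟪f, Θ p.1 p.2⟫_ℂ‖ ^ 2
          = (∑' j : ℤ, ∑' k : K j, ‖⟪f, Θ j k⟫_ℂ‖ ^ 2) := hsig
      _ ≤ (∑' j : ℤ, ‖g j‖ ^ 2) := by
          refine Summable.tsum_le_tsum (fun j => ?_) hmargS hGj.summable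
          rw [hfibeq j]
          exact (hfb j).2
      _ = ‖f - P f‖ ^ 2 := hGj.tsum_eq
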